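/- For any text T of length n ending with a unique sentinel character, the number of phrases of the LZ77 parsing of the square satisfies H^{LZ77}(TT$) ≤ H^{LZ77}(T$) + 1, where H^{LZ77}(S) denotes the number of phrases in the LZ77 parsing of S. -/

import Mathlib

variable {α : Type*} [DecidableEq α]

/-- `Z` is an LZ77 parsing of `T`. -/
def IsLZ77Parsing (T : List α) (Z : List (List α)) : Prop :=
  Z.flatten = T ∧ (∀ w ∈ Z, w ≠ []) ∧
  (∀ p : Fin Z.length, (Z.get p).dropLast <:+: (Z.take (p : ℕ)).flatten) ∧
  (∀ p : Fin Z.length, ∀ w : List α, w <+: (Z.drop (p : ℕ)).flatten →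
      w <:+: (Z.take (p : ℕ)).flatten → w.length < (Z.get p).length)

lemma flatten_take_drop (Z : List (List α)) (i : ℕ) :
    (Z.take i).flatten ++ (Z.drop i).flatten = Z.flatten := by
  rw [← List.flatten_append, List.take_append_drop]

lemma greedy_ge {S : List α} {Z Y : List (List α)}
    (hZ : IsLZ77Parsing S Z)
    (hYf : Y.flatten = S) (hYne : ∀ w ∈ Y, w ≠ [])
    (hYinf : ∀ p : Fin Y.length, (Y.get p).dropLast <:+: (Y.take (p : ℕ)).flatten) :
    ∀ i, i ≤ Z.length → (Y.take i).flatten.length ≤ (Z.take i).flatten.length := by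
  obtain ⟨hZf, hZne, -, hZmax⟩ := hZ
  intro i
  induction i with
  | zero => simp
  | succ i ih =>
    intro hi1
    have hi : i < Z.length := hi1
    have ihh := ih (le_of_lt hi)
    have hZtake : Z.take (i+1) = Z.take i ++ [Z[i]] := by
      rw [← List.take_concat_get hi, List.concat_eq_append]
    have hgnext : (Z.take (i+1)).flatten.length
        = (Z.take i).flatten.length + Z[i].length := by
      rw [hZtake, List.flatten_append, List.length_append, List.flatten_cons,
        List.flatten_nil, List.append_nil]
    have hZpos : 1 ≤ Z[i].length :=
      List.length_pos_iff.mpr (hZne Z[i] (List.getElem_mem hi))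
    by_cases hiY : i < Y.length
    · have hYtake : Y.take (i+1) = Y.take i ++ [Y[i]] := by
        rw [← List.take_concat_get hiY, List.concat_eq_append]
      have hbnext : (Y.take (i+1)).flatten.length
          = (Y.take i).flatten.length + Y[i].length := by
        rw [hYtake, List.flatten_append, List.length_append, List.flatten_cons,
        List.flatten_nil, List.append_nil]
      set b := (Y.take i).flatten.length with hbdef
      set g := (Z.take i).flatten.length with hgdef
      set v := Y[i] with hvdef
      rw [hbnext, hgnext]
      by_cases hcase : b + v.length ≤ g + 1
      · omega
      push_neg at hcase
      -- hard case
      have hbg : b ≤ g := ihh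
      -- S decompositions
      have hZsplit : (Z.take i).flatten ++ (Z.drop i).flatten = S := by
        rw [flatten_take_drop, hZf]
      have hYsplit : (Y.take i).flatten ++ (Y.drop i).flatten = S := by
        rw [flatten_take_drop, hYf]
      have hSdropg : S.drop g = (Z.drop i).flatten := by
        rw [← hZsplit]; exact List.drop_left
      have hStakeg : S.take g = (Z.take i).flatten := by
        rw [← hZsplit]; exact List.take_left
      have hStakeb : S.take b = (Y.take i).flatten := by
        rw [← hYsplit]; exact List.take_left
      have hYdrop : Y.drop i = v :: Y.drop (i+1) := List.drop_eq_getElem_cons hiY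
      have hSdropb : S.drop b = v ++ (Y.drop (i+1)).flatten := by
        rw [← hYsplit]
        have := @List.drop_left _ (Y.take i).flatten (Y.drop i).flatten
        rw [this, hYdrop]; simp
      have hvd : v.dropLast = (S.drop b).take (v.length - 1) := by
        rw [hSdropb, List.take_append_of_le_length (by omega),
          ← List.dropLast_eq_take]
      set L := b + v.length - 1 - g with hLdef
      set w' := (S.drop g).take L with hw'def
      have hw'eq : w' = v.dropLast.drop (g - b) := by
        rw [hvd, List.drop_take, List.drop_drop]
        have e1 : b + (g - b) = g := by omega
        have e2 : v.length - 1 - (g - b) = L := by omega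
        rw [e1, e2]
      -- w' is a prefix of the remaining text
      have hpref : w' <+: (Z.drop i).flatten := by
        rw [← hSdropg]; exact List.take_prefix _ _
      -- w' is an infix of the already-processed prefix
      have hinf : w' <:+: (Z.take i).flatten := by
        rw [← hStakeg]
        have h1 : w' <:+ v.dropLast := hw'eq ▸ List.drop_suffix _ _
        have h2 : v.dropLast <:+: S.take b := by
          rw [hStakeb]
          have := hYinf ⟨i, hiY⟩
          simpa using this
        have h3 : S.take b <+: S.take g := List.take_prefix_take_left hbg
        exact (h1.isInfix.trans h2).trans h3.isInfix
      have hlt := hZmax ⟨i, hi⟩ w' hpref hinf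
      simp only [List.get_eq_getElem] at hlt
      -- length of w'
      have hble : b + v.length ≤ S.length := by
        have h4 := flatten_take_drop Y (i+1)
        rw [hYf] at h4
        have h5 := congrArg List.length h4
        rw [List.length_append] at h5
        omega
      have hw'len : w'.length = L := by
        rw [hw'def, List.length_take, List.length_drop]
        omega
      omega
    · push_neg at hiY
      have : Y.take (i+1) = Y.take i := by
        rw [List.take_of_length_le hiY, List.take_of_length_le (by omega)]
      rw [this, hgnext]
      omega

lemma greedy_le_valid {S : List α} {Z Y : List (List α)}
    (hZ : IsLZ77Parsing S Z)
    (hYf : Y.flatten = S) (hYne : ∀ w ∈ Y, w ≠ [])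
    (hYinf : ∀ p : Fin Y.length, (Y.get p).dropLast <:+: (Y.take (p : ℕ)).flatten) :
    Z.length ≤ Y.length := by
  by_contra hc
  push_neg at hc
  have hb := greedy_ge hZ hYf hYne hYinf Y.length hc.le
  rw [List.take_length, hYf] at hb
  have h1 := flatten_take_drop Z Y.length
  rw [hZ.1] at h1
  have h2 := congrArg List.length h1
  rw [List.length_append] at h2
  have hdropcons : Z.drop Y.length = Z[Y.length] :: Z.drop (Y.length+1) :=
    List.drop_eq_getElem_cons hc
  have hne := hZ.2.1 Z[Y.length] (List.getElem_mem hc)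
  have hpos : 1 ≤ (Z.drop Y.length).flatten.length := by
    rw [hdropcons, List.flatten_cons, List.length_append]
    have := List.length_pos_iff.mpr hne
    omega
  omega

lemma list_getElem_of_getElem? {l : List α} {i : ℕ} {x : α} (hi : i < l.length)
    (h : l[i]? = some x) : l[i] = x := by
  rw [List.getElem?_eq_getElem hi] at h
  exact (Option.some.inj h)

/-- `H^{LZ77}(TT$) ≤ H^{LZ77}(T$) + 1`. -/
theorem lz77_square_le (T : List α) (d : α) (hd : d ∉ T)
    (Z Z' : List (List α))
    (h : IsLZ77Parsing (T ++ T ++ [d]) Z)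
    (h' : IsLZ77Parsing (T ++ [d]) Z') :
    Z.length ≤ Z'.length + 1 := by
  cases T with
  | nil =>
      simp only [List.nil_append] at h h'
      have := greedy_le_valid h h'.1 h'.2.1 h'.2.2.1
      omega
  | cons a T' =>
      have hZ'ne : Z' ≠ [] := by
        intro e
        have := h'.1
        rw [e] at this
        simp at this
      set lastZ := Z'.getLast hZ'ne with hlastZdef
      set u := lastZ.dropLast with hudef
      have hlast : Z'.dropLast ++ [lastZ] = Z' := List.dropLast_append_getLast hZ'ne
      have hfl : Z'.dropLast.flatten ++ lastZ = (a :: T') ++ [d] := by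
        conv_rhs => rw [← h'.1, ← hlast]
        rw [List.flatten_append, List.flatten_cons, List.flatten_nil, List.append_nil]
      have hlastne : lastZ ≠ [] := h'.2.1 lastZ (List.getLast_mem hZ'ne)
      have hlastZeq : u ++ [lastZ.getLast hlastne] = lastZ :=
        List.dropLast_append_getLast hlastne
      have hTu : Z'.dropLast.flatten ++ u = a :: T' := by
        have h1 : (Z'.dropLast.flatten ++ u) ++ [lastZ.getLast hlastne]
            = (a :: T') ++ [d] := by
          rw [List.append_assoc, hlastZeq, hfl]
        have h2 := congrArg List.dropLast h1
        rwa [List.dropLast_concat, List.dropLast_concat] at h2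
      have hk1 : Z'.dropLast.length = Z'.length - 1 := List.length_dropLast
      have hZ'pos : 1 ≤ Z'.length := List.length_pos_iff.mpr hZ'ne
      have hYlen : (Z'.dropLast ++ [u ++ [a], T' ++ [d]]).length = Z'.length + 1 := by
        rw [List.length_append, hk1]
        simp only [List.length_cons, List.length_nil]
        omega
      -- flatten of Y
      have hYf : (Z'.dropLast ++ [u ++ [a], T' ++ [d]]).flatten
          = (a :: T') ++ (a :: T') ++ [d] := by
        have h1 : (Z'.dropLast ++ [u ++ [a], T' ++ [d]]).flatten
            = (Z'.dropLast.flatten ++ u) ++ ((a :: T') ++ [d]) := by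
          simp
        rw [h1, hTu, ← List.append_assoc]
      -- nonempty phrases
      have hYne : ∀ w ∈ Z'.dropLast ++ [u ++ [a], T' ++ [d]], w ≠ [] := by
        intro w hw
        rw [List.mem_append] at hw
        rcases hw with hw | hw
        · exact h'.2.1 w (List.mem_of_mem_dropLast hw)
        · simp only [List.mem_cons, List.mem_singleton] at hw
          rcases hw with rfl | rfl | hw
          · simp
          · simp
          · simp at hw
      -- take of Y agrees with take of Z' in the low range
      have htake : ∀ n, n ≤ Z'.length - 1 →
          (Z'.dropLast ++ [u ++ [a], T' ++ [d]]).take n = Z'.take n := by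
        intro n hn
        rw [List.take_append_of_le_length (by rw [hk1]; omega),
          List.dropLast_eq_take, List.take_take, min_eq_left hn]
      -- the dropLast-infix condition
      have hYinf : ∀ p : Fin (Z'.dropLast ++ [u ++ [a], T' ++ [d]]).length,
          ((Z'.dropLast ++ [u ++ [a], T' ++ [d]]).get p).dropLast <:+:
            ((Z'.dropLast ++ [u ++ [a], T' ++ [d]]).take (p : ℕ)).flatten := by
        intro p
        obtain ⟨pv, hpv⟩ := p
        simp only [List.get_eq_getElem]
        have hp : pv < Z'.length + 1 := by rw [← hYlen]; exact hpv
        rcases lt_trichotomy pv (Z'.length - 1) with hlt | heq | hgt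
        · -- an original phrase
          have hpZ : pv < Z'.length := by omega
          have hget : (Z'.dropLast ++ [u ++ [a], T' ++ [d]])[pv] = Z'[pv] := by
            apply list_getElem_of_getElem? hpv
            rw [List.getElem?_append_left (by rw [hk1]; omega),
              List.getElem?_dropLast, if_pos hlt, List.getElem?_eq_getElem hpZ]
          rw [hget, htake pv (le_of_lt hlt)]
          have := h'.2.2.1 ⟨pv, hpZ⟩
          simpa using this
        · -- the phrase u ++ [a]
          have hget : (Z'.dropLast ++ [u ++ [a], T' ++ [d]])[pv] = u ++ [a] := by
            apply list_getElem_of_getElem? hpv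
            rw [List.getElem?_append_right (by rw [hk1]; omega), hk1,
              show pv - (Z'.length - 1) = 0 from by omega]
            rfl
          rw [hget, List.dropLast_concat, heq, htake _ le_rfl]
          have hgl : Z'.get ⟨Z'.length - 1, by omega⟩ = lastZ := by
            simp only [List.get_eq_getElem, hlastZdef]
            rw [List.getLast_eq_getElem]
          have := h'.2.2.1 ⟨Z'.length - 1, by omega⟩
          rw [hgl] at this
          exact this
        · -- the last phrase T' ++ [d]
          have hpk : pv = Z'.length := by omega
          have hget : (Z'.dropLast ++ [u ++ [a], T' ++ [d]])[pv] = T' ++ [d] := by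
            apply list_getElem_of_getElem? hpv
            rw [List.getElem?_append_right (by rw [hk1]; omega), hk1,
              show pv - (Z'.length - 1) = 1 from by omega]
            rfl
          have htk : (Z'.dropLast ++ [u ++ [a], T' ++ [d]]).take pv
              = Z'.dropLast ++ [u ++ [a]] := by
            rw [show pv = Z'.dropLast.length + 1 from by omega, List.take_append]
            rw [List.take_of_length_le (by omega),
              show Z'.dropLast.length + 1 - Z'.dropLast.length = 1 from by omega]
            rfl
          rw [hget, List.dropLast_concat, htk, List.flatten_append, List.flatten_cons,
            List.flatten_nil, List.append_nil, ← List.append_assoc, hTu]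
          have h1 : T' <:+ a :: T' := ⟨[a], rfl⟩
          have h2 : (a :: T') <+: (a :: T') ++ [a] := List.prefix_append _ _
          exact h1.isInfix.trans h2.isInfix
      have := greedy_le_valid h hYf hYne hYinf
      omega
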